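/- Let P' be a non-atomic probability distribution on ℝ with finite positive standard deviation σ', and let ξ > 0. If Y₁ and Y₂ are independent random variables each distributed according to P', then Pr[|Y₁ − Y₂| < ξ] ≥ min{1/8, ξ/(32σ')}. -/

import Mathlib

set_option maxHeartbeats 1000000


open MeasureTheory ProbabilityTheory

/-- **Two i.i.d. samples are close with non-negligible probability.**
Let `P'` be a non-atomic probability distribution on `ℝ` with finite positive
standard deviation `σ'`, and let `ξ > 0`. If `Y₁, Y₂` are independent with law `P'`
(modeled by the product measure `P'.prod P'`), then
`Pr[|Y₁ - Y₂| < ξ] ≥ min {1/8, ξ/(32σ')}`. -/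
theorem iid_close_prob_lower_bound
    (P' : Measure ℝ) [IsProbabilityMeasure P']
    (hatom : ∀ x : ℝ, P' {x} = 0)
    (hL2 : MemLp id 2 P')
    (σ' : ℝ) (hσ : 0 < σ') (hvar : variance id P' = σ' ^ 2)
    (ξ : ℝ) (hξ : 0 < ξ) :
    ((P'.prod P') {y : ℝ × ℝ | |y.1 - y.2| < ξ}).toReal ≥
      min (1 / 8) (ξ / (32 * σ')) := by
  classical
  set m := ∫ x, x ∂P' with hm
  set N : ℕ := ⌈4 * σ' / ξ⌉₊ with hNdef
  have hratio : 0 < 4 * σ' / ξ := by positivity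
  have hN1 : 1 ≤ N := Nat.one_le_ceil_iff.mpr hratio
  have hNpos : (0:ℝ) < N := by exact_mod_cast hN1
  have hNξ : 4 * σ' ≤ N * ξ := by
    have h := Nat.le_ceil (4 * σ' / ξ)
    have := mul_le_mul_of_nonneg_right h hξ.le
    rwa [div_mul_cancel₀ _ hξ.ne'] at this
  set a := m - 2 * σ' with ha
  set I : ℕ → Set ℝ := fun i => Set.Ico (a + i * ξ) (a + (i + 1) * ξ) with hI
  -- Chebyshev
  have hcheb : P' {x : ℝ | 2 * σ' ≤ |x - m|} ≤ ENNReal.ofReal (1 / 4) := by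
    have h := meas_ge_le_variance_div_sq (μ := P') hL2 (c := 2 * σ') (by positivity)
    have hconv : variance id P' / (2 * σ') ^ 2 = 1 / 4 := by
      rw [hvar]; field_simp; ring
    simpa [hconv, hm, id] using h
  -- the good set
  have hgood : (ENNReal.ofReal (3 / 4)) ≤ P' {x : ℝ | |x - m| < 2 * σ'} := by
    have hAmeas : MeasurableSet {x : ℝ | 2 * σ' ≤ |x - m|} := by
      apply measurableSet_le measurable_const
      exact (measurable_id.sub measurable_const).abs
    have hc : {x : ℝ | |x - m| < 2 * σ'} = {x : ℝ | 2 * σ' ≤ |x - m|}ᶜ := by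
      ext x; simp [not_le]
    rw [hc, measure_compl hAmeas (measure_ne_top _ _), measure_univ]
    have : ENNReal.ofReal (3/4) = 1 - ENNReal.ofReal (1/4) := by
      rw [← ENNReal.ofReal_one, ← ENNReal.ofReal_sub _ (by norm_num)]; norm_num
    rw [this]
    exact tsub_le_tsub_left hcheb _
  -- inclusion in union
  have hsub : {x : ℝ | |x - m| < 2 * σ'} ⊆ ⋃ i ∈ Finset.range N, I i := by
    intro x hx
    simp only [Set.mem_setOf_eq, abs_sub_lt_iff] at hx
    have hxa : a ≤ x := by simp [ha]; linarith [hx.2]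
    have hxb : x < a + N * ξ := by
      have : x < a + 4 * σ' := by simp [ha]; linarith [hx.1]
      linarith
    set i : ℕ := ⌊(x - a) / ξ⌋₊ with hi
    have hnn : 0 ≤ (x - a) / ξ := div_nonneg (by linarith) hξ.le
    have hiN : i < N := by
      apply Nat.floor_lt hnn |>.mpr
      rw [div_lt_iff₀ hξ]
      push_cast [hNpos.le]
      linarith
    refine Set.mem_biUnion (Finset.mem_range.mpr hiN) ?_
    constructor
    · have := Nat.floor_le hnn
      rw [le_div_iff₀ hξ] at this
      linarith
    · have := Nat.lt_floor_add_one ((x - a) / ξ)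
      rw [div_lt_iff₀ hξ] at this
      push_cast at this ⊢
      linarith
  -- disjointness
  have hdisj : ∀ i j : ℕ, i ≠ j → Disjoint (I i) (I j) := by
    have key : ∀ i j : ℕ, i < j → Disjoint (I i) (I j) := by
      intro i j hij
      rw [hI, Set.Ico_disjoint_Ico]
      have : (i:ℝ) + 1 ≤ j := by exact_mod_cast hij
      have h1 : a + (i + 1) * ξ ≤ a + j * ξ := by nlinarith
      calc min (a + (↑i + 1) * ξ) (a + (↑j + 1) * ξ) ≤ a + (↑i + 1) * ξ := min_le_left _ _
        _ ≤ a + ↑j * ξ := h1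
        _ ≤ max (a + ↑i * ξ) (a + ↑j * ξ) := le_max_right _ _
    intro i j hij
    rcases lt_or_gt_of_ne hij with h | h
    · exact key i j h
    · exact (key j i h).symm
  have hImeas : ∀ i, MeasurableSet (I i) := fun i => measurableSet_Ico
  set p : ℕ → ℝ := fun i => (P' (I i)).toReal with hp
  have hpnn : ∀ i, 0 ≤ p i := fun i => ENNReal.toReal_nonneg
  -- sum lower bound
  have hsum : 3 / 4 ≤ ∑ i ∈ Finset.range N, p i := by
    have h1 : P' (⋃ i ∈ Finset.range N, I i) = ∑ i ∈ Finset.range N, P' (I i) := by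
      apply measure_biUnion_finset _ (fun i _ => hImeas i)
      intro i hi j hj hij
      exact hdisj i j hij
    have h2 : ENNReal.ofReal (3/4) ≤ ∑ i ∈ Finset.range N, P' (I i) := by
      rw [← h1]; exact hgood.trans (measure_mono hsub)
    have h3 : (∑ i ∈ Finset.range N, P' (I i)).toReal = ∑ i ∈ Finset.range N, p i := by
      rw [ENNReal.toReal_sum]
      intro i _; exact measure_ne_top _ _
    have h4 := ENNReal.toReal_mono (by
      rw [← h1]; exact (measure_ne_top _ _)) h2
    rwa [ENNReal.toReal_ofReal (by norm_num), h3] at h4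
  -- product measure bound
  have hprodsub : (⋃ i ∈ Finset.range N, (I i ×ˢ I i)) ⊆ {y : ℝ × ℝ | |y.1 - y.2| < ξ} := by
    intro y hy
    simp only [Set.mem_iUnion, Set.mem_prod] at hy
    obtain ⟨i, _, h1, h2⟩ := hy
    simp only [hI, Set.mem_Ico] at h1 h2
    simp only [Set.mem_setOf_eq, abs_sub_lt_iff]
    constructor <;> nlinarith [h1.1, h1.2, h2.1, h2.2]
  have hprodeq : (P'.prod P') (⋃ i ∈ Finset.range N, (I i ×ˢ I i))
      = ∑ i ∈ Finset.range N, P' (I i) * P' (I i) := by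
    rw [measure_biUnion_finset]
    · exact Finset.sum_congr rfl fun i _ => Measure.prod_prod _ _
    · intro i hi j hj hij
      exact Set.Disjoint.set_prod_left (hdisj i j hij) _ _
    · exact fun i _ => (hImeas i).prod (hImeas i)
  have hmain : ∑ i ∈ Finset.range N, p i ^ 2
      ≤ ((P'.prod P') {y : ℝ × ℝ | |y.1 - y.2| < ξ}).toReal := by
    have h1 := measure_mono (μ := P'.prod P') hprodsub
    rw [hprodeq] at h1
    have h2 := ENNReal.toReal_mono (measure_ne_top _ _) h1
    have h3 : (∑ i ∈ Finset.range N, P' (I i) * P' (I i)).toReal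
        = ∑ i ∈ Finset.range N, p i ^ 2 := by
      rw [ENNReal.toReal_sum (fun i _ => ENNReal.mul_ne_top (measure_ne_top _ _) (measure_ne_top _ _))]
      exact Finset.sum_congr rfl fun i _ => by rw [ENNReal.toReal_mul]; ring
    rwa [h3] at h2
  -- Cauchy-Schwarz
  have hCS : (∑ i ∈ Finset.range N, p i) ^ 2 ≤ N * ∑ i ∈ Finset.range N, p i ^ 2 := by
    have := sq_sum_le_card_mul_sum_sq (s := Finset.range N) (f := p)
    simpa using this
  have hfinal : 9 / (16 * N) ≤ ∑ i ∈ Finset.range N, p i ^ 2 := by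
    have h1 : (3/4:ℝ)^2 ≤ (∑ i ∈ Finset.range N, p i) ^ 2 := by
      apply sq_le_sq' <;> nlinarith [Finset.sum_nonneg (fun i (_ : i ∈ Finset.range N) => hpnn i)]
    have h2 : (9/16:ℝ) ≤ N * ∑ i ∈ Finset.range N, p i ^ 2 := by nlinarith
    rw [div_le_iff₀ (by positivity)]
    nlinarith
  -- conclude
  clear hsub hdisj hcheb hgood hprodsub hprodeq hImeas hCS hpnn hsum hatom hL2 hvar
  have hmin : min (1/8) (ξ / (32 * σ')) ≤ 9 / (16 * N) := by
    rcases le_or_gt (4 * σ') ξ with h | h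
    · have hNle : N ≤ 1 := Nat.ceil_le.mpr (by rw [div_le_iff₀ hξ]; push_cast; linarith)
      have : N = 1 := le_antisymm hNle hN1
      rw [this]
      calc min (1/8:ℝ) (ξ / (32 * σ')) ≤ 1/8 := min_le_left _ _
        _ ≤ 9 / (16 * (1:ℕ)) := by norm_num
    · have h1 : (N:ℝ) < 4 * σ' / ξ + 1 := Nat.ceil_lt_add_one hratio.le
      have h2 : (1:ℝ) < 4 * σ' / ξ := by rw [lt_div_iff₀ hξ]; linarith
      have h3 : (N:ℝ) < 8 * σ' / ξ := by
        have he : 8 * σ' / ξ = 2 * (4 * σ' / ξ) := by ring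
        rw [he]; linarith
      have hN8 : (N:ℝ) * ξ ≤ 8 * σ' := by
        have h4 := mul_lt_mul_of_pos_right h3 hξ
        rw [div_mul_cancel₀ _ hξ.ne'] at h4
        linarith
      calc min (1/8:ℝ) (ξ / (32 * σ')) ≤ ξ / (32 * σ') := min_le_right _ _
        _ ≤ 9 / (16 * N) := by
          rw [div_le_div_iff₀ (by positivity) (by positivity)]
          nlinarith [hξ.le, hσ.le]
  calc min (1/8:ℝ) (ξ / (32 * σ')) ≤ 9 / (16 * N) := hmin
    _ ≤ ∑ i ∈ Finset.range N, p i ^ 2 := hfinal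
    _ ≤ _ := hmain
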